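/- Let F be a Pythagorean field of characteristic 0 and let ℓ₁ = (a₁, b₁, c₁) and ℓ₂ = (a₂, b₂, c₂) be two non-isotropic lines in the Cartesian plane over F (so a_i² + b_i² ≠ 0 for i = 1, 2). Then there exists a non-isotropic line k = (a, b, c) with a² + b² ≠ 0 such that for every point P with a₁P₁ + b₁P₂ + c₁ = 0, the reflection of P across k lies on ℓ₂, i.e., a₂·(refl_k P)₁ + b₂·(refl_k P)₂ + c₂ = 0. (Every pair of non-isotropic lines has a symmetric axis; this is axiom (H*3), and for intersecting lines it is Wu's axiom of symmetric axis.) -/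

import Mathlib

/-- The reflection of a point `P` across the line `a·x + b·y + c = 0`
(meaningful when the line is non-isotropic, i.e. `a² + b² ≠ 0`):
`refl P = P − (2(a·P₁ + b·P₂ + c)/(a² + b²))·(a, b)`. -/
def reflLine {F : Type*} [Field F] (a b c : F) (P : F × F) : F × F :=
  (P.1 - 2 * (a * P.1 + b * P.2 + c) / (a ^ 2 + b ^ 2) * a,
   P.2 - 2 * (a * P.1 + b * P.2 + c) / (a ^ 2 + b ^ 2) * b)

lemma key_refl {F : Type*} [Field F] (A₁ B₁ C₁ A₂ B₂ C₂ ε x y : F)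
    (h1 : A₁ ^ 2 + B₁ ^ 2 = 1) (h2 : A₂ ^ 2 + B₂ ^ 2 = 1) (hε : ε ^ 2 = 1)
    (hs : (A₁ + ε * A₂) ^ 2 + (B₁ + ε * B₂) ^ 2 ≠ 0)
    (hP : A₁ * x + B₁ * y + C₁ = 0) :
    A₂ * (reflLine (A₁ + ε * A₂) (B₁ + ε * B₂) (C₁ + ε * C₂) (x, y)).1 +
      B₂ * (reflLine (A₁ + ε * A₂) (B₁ + ε * B₂) (C₁ + ε * C₂) (x, y)).2 + C₂ = 0 := by
  simp only [reflLine]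
  rw [div_mul_eq_mul_div, div_mul_eq_mul_div, sub_div' hs, sub_div' hs, mul_div_assoc', mul_div_assoc', ← add_div, div_add' _ _ _ hs, div_eq_zero_iff, or_iff_left hs]
  linear_combination
    (((A₁ + ε * A₂) * x + (B₁ + ε * B₂) * y + (C₁ + ε * C₂)) * ε) * h1 +
    (-((A₁ + ε * A₂) * x + (B₁ + ε * B₂) * y + (C₁ + ε * C₂)) * (2 * ε - ε ^ 3)) * h2 +
    (-((A₁ + ε * A₂) ^ 2 + (B₁ + ε * B₂) ^ 2) * (A₂ * x + B₂ * y + C₂) +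
      ((A₁ + ε * A₂) * x + (B₁ + ε * B₂) * y + (C₁ + ε * C₂)) *
        (2 * A₁ * A₂ + 2 * B₁ * B₂ + ε)) * hε +
    (-((A₁ + ε * A₂) ^ 2 + (B₁ + ε * B₂) ^ 2) * ε) * hP

/-- In the Cartesian plane over a Pythagorean field of characteristic 0,
any two non-isotropic lines have a symmetric axis: a non-isotropic fold placing
the first line onto the second (axiom (H*3)). -/
theorem stmt_7 {F : Type*} [Field F] [CharZero F]
    (hPy : ∀ x y : F, ∃ z : F, x ^ 2 + y ^ 2 = z ^ 2)
    (a₁ b₁ c₁ a₂ b₂ c₂ : F)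
    (h₁ : a₁ ^ 2 + b₁ ^ 2 ≠ 0) (h₂ : a₂ ^ 2 + b₂ ^ 2 ≠ 0) :
    ∃ a b c : F, a ^ 2 + b ^ 2 ≠ 0 ∧
      ∀ P : F × F, a₁ * P.1 + b₁ * P.2 + c₁ = 0 →
        a₂ * (reflLine a b c P).1 + b₂ * (reflLine a b c P).2 + c₂ = 0 := by
  obtain ⟨z₁, hz₁⟩ := hPy a₁ b₁
  obtain ⟨z₂, hz₂⟩ := hPy a₂ b₂
  have hz₁0 : z₁ ≠ 0 := by intro h; rw [h] at hz₁; simp at hz₁; exact h₁ hz₁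
  have hz₂0 : z₂ ≠ 0 := by intro h; rw [h] at hz₂; simp at hz₂; exact h₂ hz₂
  set A₁ := a₁ / z₁ with hA₁; set B₁ := b₁ / z₁ with hB₁; set C₁ := c₁ / z₁ with hC₁
  set A₂ := a₂ / z₂ with hA₂; set B₂ := b₂ / z₂ with hB₂; set C₂ := c₂ / z₂ with hC₂
  have hn1 : A₁ ^ 2 + B₁ ^ 2 = 1 := by
    rw [hA₁, hB₁]; field_simp; linear_combination hz₁
  have hn2 : A₂ ^ 2 + B₂ ^ 2 = 1 := by
    rw [hA₂, hB₂]; field_simp; linear_combination hz₂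
  have hε : ∃ ε : F, ε ^ 2 = 1 ∧ (A₁ + ε * A₂) ^ 2 + (B₁ + ε * B₂) ^ 2 ≠ 0 := by
    by_cases h : (A₁ + 1 * A₂) ^ 2 + (B₁ + 1 * B₂) ^ 2 = 0
    · refine ⟨-1, by ring, ?_⟩
      intro h'
      have h4 : (4 : F) = 0 := by linear_combination h + h' - 2 * hn1 - 2 * hn2
      norm_num at h4
    · exact ⟨1, by ring, h⟩
  obtain ⟨ε, hε2, hεs⟩ := hε
  refine ⟨A₁ + ε * A₂, B₁ + ε * B₂, C₁ + ε * C₂, hεs, ?_⟩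
  intro P hP
  have hP' : A₁ * P.1 + B₁ * P.2 + C₁ = 0 := by
    rw [hA₁, hB₁, hC₁]; field_simp; linear_combination hP
  have hkey := key_refl A₁ B₁ C₁ A₂ B₂ C₂ ε P.1 P.2 hn1 hn2 hε2 hεs hP'
  have ha : a₂ = z₂ * A₂ := by rw [hA₂]; field_simp
  have hb : b₂ = z₂ * B₂ := by rw [hB₂]; field_simp
  have hc : c₂ = z₂ * C₂ := by rw [hC₂]; field_simp
  rw [ha, hb, hc]
  have hPpair : (P.1, P.2) = P := rfl
  rw [← hPpair]
  linear_combination z₂ * hkey
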